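/- Let ν be a finite measure on ℝ≥0 × ℝ≥0 with coordinates (g0, g1), let λ, μ ≥ 0, and assume g1 and g0 are ν-integrable. If ∫ g1 dν > ∫ (λ + μ·g0) dν, then there exists p > 0 such that ∫ (log(1 + g1·p) − (λ + μ·g0)·p) dν > 0; that is, the maximizer over p ≥ 0 of the integrated per-region Lagrangian is strictly positive. -/

import Mathlib

open MeasureTheory Real
open scoped NNReal

private lemma log_one_add_ge (x : ℝ) (hx : 0 ≤ x) : x - x ^ 2 ≤ Real.log (1 + x) := by
  have h1 : (0:ℝ) < 1 + x := by linarith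
  have h2 : Real.log (1 + x)⁻¹ ≤ (1 + x)⁻¹ - 1 :=
    Real.log_le_sub_one_of_pos (by positivity)
  rw [Real.log_inv] at h2
  have h3 : (1 + x) * (1 + x)⁻¹ = 1 := mul_inv_cancel₀ h1.ne'
  nlinarith [h2, h3, sq_nonneg x, mul_pos h1 (inv_pos.mpr h1)]

/-- Centroid condition, nondegenerate case: if the per-region mean of `g1` strictly
exceeds that of `λ + μ g0`, then some strictly positive power level achieves a
strictly positive integrated per-region Lagrangian, so the maximizer over `p ≥ 0`
is strictly positive. -/
theorem positive_power_optimal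
    (ν : Measure (ℝ≥0 × ℝ≥0)) [IsFiniteMeasure ν]
    (lam mu : ℝ) (hlam : 0 ≤ lam) (hmu : 0 ≤ mu)
    (hg1 : Integrable (fun x => (x.2 : ℝ)) ν)
    (hg0 : Integrable (fun x => (x.1 : ℝ)) ν)
    (h : ∫ x, (lam + mu * (x.1 : ℝ)) ∂ν < ∫ x, (x.2 : ℝ) ∂ν) :
    ∃ p : ℝ, 0 < p ∧
      0 < ∫ x, (Real.log (1 + (x.2 : ℝ) * p) - (lam + mu * (x.1 : ℝ)) * p) ∂ν := by
  have hmeas2 : Measurable fun x : ℝ≥0 × ℝ≥0 => (x.2 : ℝ) := by fun_prop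
  set a := ∫ x, (lam + mu * (x.1 : ℝ)) ∂ν with ha
  -- truncation converges
  have key : Filter.Tendsto (fun n : ℕ => ∫ x, min ((x.2 : ℝ)) (n : ℝ) ∂ν)
      Filter.atTop (nhds (∫ x, (x.2 : ℝ) ∂ν)) := by
    apply tendsto_integral_of_dominated_convergence (fun x => (x.2 : ℝ)) _ hg1
    · intro n
      filter_upwards with x
      have h0 : (0:ℝ) ≤ (x.2:ℝ) := x.2.coe_nonneg
      rw [Real.norm_eq_abs, abs_of_nonneg (le_min h0 (Nat.cast_nonneg n))]
      exact min_le_left _ _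
    · filter_upwards with x
      have : ∀ᶠ n : ℕ in Filter.atTop, min ((x.2:ℝ)) (n:ℝ) = (x.2:ℝ) := by
        filter_upwards [Filter.eventually_ge_atTop ⌈(x.2:ℝ)⌉₊] with n hn
        exact min_eq_left (le_trans (Nat.le_ceil _) (by exact_mod_cast hn))
      exact tendsto_const_nhds.congr' (this.mono fun n hn => hn.symm)
    · intro n
      exact ((hmeas2.min measurable_const).aestronglyMeasurable)
  have hev : ∀ᶠ n : ℕ in Filter.atTop, a < ∫ x, min ((x.2 : ℝ)) (n : ℝ) ∂ν :=
    key.eventually (eventually_gt_nhds h)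
  obtain ⟨n, hn⟩ := hev.exists
  set M : ℝ := (n : ℝ) with hM
  have hM0 : 0 ≤ M := Nat.cast_nonneg n
  set V : ℝ := (ν Set.univ).toReal with hV
  have hV0 : 0 ≤ V := ENNReal.toReal_nonneg
  set I : ℝ := ∫ x, min ((x.2 : ℝ)) M ∂ν with hI
  set D : ℝ := I - a with hD
  have hD0 : 0 < D := by simp only [hD]; linarith
  set p : ℝ := min 1 (D / (2 * (M ^ 2 * V + 1))) with hp
  have hden : 0 < 2 * (M ^ 2 * V + 1) := by positivity
  have hp0 : 0 < p := lt_min one_pos (div_pos hD0 hden)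
  refine ⟨p, hp0, ?_⟩
  have hp2 : p * (2 * (M ^ 2 * V + 1)) ≤ D := by
    have := min_le_right 1 (D / (2 * (M ^ 2 * V + 1)))
    calc p * (2 * (M ^ 2 * V + 1)) ≤ D / (2 * (M ^ 2 * V + 1)) * (2 * (M ^ 2 * V + 1)) :=
          mul_le_mul_of_nonneg_right this hden.le
      _ = D := div_mul_cancel₀ _ hden.ne'
  -- integrability
  have hmin_int : Integrable (fun x => min ((x.2 : ℝ)) M) ν := by
    refine Integrable.mono' hg1 ((hmeas2.min measurable_const).aestronglyMeasurable) ?_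
    filter_upwards with x
    have h0 : (0:ℝ) ≤ (x.2:ℝ) := x.2.coe_nonneg
    rw [Real.norm_eq_abs, abs_of_nonneg (le_min h0 hM0)]
    exact min_le_left _ _
  have hlog_int : Integrable (fun x => Real.log (1 + (x.2 : ℝ) * p)) ν := by
    refine Integrable.mono' (hg1.mul_const p)
      ((Real.measurable_log.comp (((hmeas2.mul_const p)).const_add 1)).aestronglyMeasurable) ?_
    filter_upwards with x
    have h0 : (0:ℝ) ≤ (x.2:ℝ) * p := mul_nonneg x.2.coe_nonneg hp0.le
    have hlog0 : 0 ≤ Real.log (1 + (x.2:ℝ) * p) := Real.log_nonneg (by linarith)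
    rw [Real.norm_eq_abs, abs_of_nonneg hlog0]
    have := Real.log_le_sub_one_of_pos (show (0:ℝ) < 1 + (x.2:ℝ) * p by linarith)
    linarith
  have hg0p : Integrable (fun x => (lam + mu * (x.1 : ℝ)) * p) ν :=
    ((integrable_const lam).add (hg0.const_mul mu)).mul_const p
  -- pointwise lower bound
  have hpt : ∀ x : ℝ≥0 × ℝ≥0,
      min ((x.2:ℝ)) M * p - M ^ 2 * p ^ 2 ≤ Real.log (1 + (x.2:ℝ) * p) := by
    intro x
    set m : ℝ := min ((x.2:ℝ)) M with hm
    have hm0 : 0 ≤ m := le_min x.2.coe_nonneg hM0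
    have hmle : m ≤ (x.2:ℝ) := min_le_left _ _
    have hmM : m ≤ M := min_le_right _ _
    have h1 : m * p - (m * p) ^ 2 ≤ Real.log (1 + m * p) :=
      log_one_add_ge _ (mul_nonneg hm0 hp0.le)
    have h2 : Real.log (1 + m * p) ≤ Real.log (1 + (x.2:ℝ) * p) := by
      apply Real.log_le_log (by positivity)
      have : m * p ≤ (x.2:ℝ) * p := mul_le_mul_of_nonneg_right hmle hp0.le
      linarith
    have h3 : (m * p) ^ 2 ≤ M ^ 2 * p ^ 2 := by
      rw [mul_pow]
      exact mul_le_mul_of_nonneg_right (pow_le_pow_left₀ hm0 hmM 2) (sq_nonneg p)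
    linarith
  -- integral lower bound
  have hlow : I * p - M ^ 2 * p ^ 2 * V ≤ ∫ x, Real.log (1 + (x.2:ℝ) * p) ∂ν := by
    have hmono : (∫ x, (min ((x.2:ℝ)) M * p - M ^ 2 * p ^ 2) ∂ν)
        ≤ ∫ x, Real.log (1 + (x.2:ℝ) * p) ∂ν :=
      integral_mono ((hmin_int.mul_const p).sub (integrable_const (M ^ 2 * p ^ 2)))
        hlog_int hpt
    rwa [integral_sub (hmin_int.mul_const p) (integrable_const _), integral_mul_const,
      integral_const, measureReal_def, smul_eq_mul, mul_comm ((ν Set.univ).toReal)] at hmono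
  have hsplit : ∫ x, (Real.log (1 + (x.2 : ℝ) * p) - (lam + mu * (x.1 : ℝ)) * p) ∂ν
      = (∫ x, Real.log (1 + (x.2 : ℝ) * p) ∂ν) - a * p := by
    rw [integral_sub hlog_int hg0p, integral_mul_const]
  rw [hsplit]
  have hfin : 0 < I * p - M ^ 2 * p ^ 2 * V - a * p := by
    have h4 : p * (p * (2 * (M ^ 2 * V + 1))) ≤ p * D :=
      mul_le_mul_of_nonneg_left hp2 hp0.le
    nlinarith [sq_nonneg p, mul_pos hp0 hp0]
  linarith
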